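/- Let X be a geodesic metric space that is δ-hyperbolic with δ > 0, let C ⊆ X be a ρ-separated subset with ρ ≥ 20δ, and fix R with 2 + 2δ ≤ R ≤ ρ/2 − 3δ. Then the finiteness axiom (P3) holds for the projection distances {d_p}_{p∈C} with projection constant 4δ: for any distinct b, c ∈ C, the set {a ∈ C ∖ {b,c} : d_a(b,c) > 4δ} is finite. -/
import Mathlib


open Set

/-- A geodesic from `x` to `y`: an isometric embedding of `[0, dist x y]` with the
prescribed endpoints. -/
def IsGeodesicFrom {X : Type*} [MetricSpace X] (γ : ℝ → X) (x y : X) : Prop :=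
  γ 0 = x ∧ γ (dist x y) = y ∧
    ∀ s ∈ Icc (0:ℝ) (dist x y), ∀ t ∈ Icc (0:ℝ) (dist x y), dist (γ s) (γ t) = |s - t|

/-- A geodesic metric space: every pair of points is joined by a geodesic. -/
def GeodesicMetricSpace (X : Type*) [MetricSpace X] : Prop :=
  ∀ x y : X, ∃ γ : ℝ → X, IsGeodesicFrom γ x y

/-- The Gromov product `(b,c)_a`. -/
noncomputable def gromovProd {X : Type*} [MetricSpace X] (a b c : X) : ℝ :=
  (dist a b + dist a c - dist b c) / 2

/-- `δ`-hyperbolicity via `δ`-thin triangles: two sides of a geodesic triangle issuing from a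
common vertex stay `δ`-close up to the Gromov product (this is exactly the condition that
pairs of points of the triangle with the same image in the comparison tripod are `δ`-close). -/
def DeltaThin (X : Type*) [MetricSpace X] (δ : ℝ) : Prop :=
  ∀ (a b c : X) (γ₁ γ₂ : ℝ → X), IsGeodesicFrom γ₁ a b → IsGeodesicFrom γ₂ a c →
    ∀ t ∈ Icc (0:ℝ) (gromovProd a b c), dist (γ₁ t) (γ₂ t) ≤ δ

/-- A subset `C` is `ρ`-separated if distinct points of `C` are at distance at least `ρ`. -/
def Separated {X : Type*} [MetricSpace X] (C : Set X) (ρ : ℝ) : Prop :=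
  ∀ c ∈ C, ∀ c' ∈ C, c ≠ c' → ρ ≤ dist c c'

open scoped ENNReal

/-- The path metric of `X ∖ B_R(p)`: the distance from `u` to `v` is the infimum of the
lengths (total variations) of continuous paths from `u` to `v` avoiding the open ball
`B_R(p)`, and `∞` if there is no such path. -/
noncomputable def pathDist {X : Type*} [MetricSpace X] (p : X) (R : ℝ) (u v : X) : ℝ≥0∞ :=
  ⨅ γ ∈ {γ : ℝ → X | ContinuousOn γ (Icc 0 1) ∧ γ 0 = u ∧ γ 1 = v ∧
      ∀ t ∈ Icc (0:ℝ) 1, R ≤ dist (γ t) p},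
    eVariationOn γ (Icc (0:ℝ) 1)

/-- The projection `π_p(a)`: the set of points in which geodesics from `p` to `a` meet the
sphere `S_p = ∂B_R(p)`. -/
def projSet {X : Type*} [MetricSpace X] (p : X) (R : ℝ) (a : X) : Set X :=
  {x : X | dist x p = R ∧
    ∃ γ : ℝ → X, IsGeodesicFrom γ p a ∧ ∃ t ∈ Icc (0:ℝ) (dist p a), γ t = x}

/-- The projection distance `d_p(a,b) = diam(π_p(a) ∪ π_p(b))`, the diameter being taken in
the path metric of `X ∖ B_R(p)`. -/
noncomputable def projDist {X : Type*} [MetricSpace X] (p : X) (R : ℝ) (a b : X) : ℝ≥0∞ :=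
  ⨆ x ∈ projSet p R a ∪ projSet p R b, ⨆ y ∈ projSet p R a ∪ projSet p R b,
    pathDist p R x y


/-! ### Auxiliary lemmas -/

private lemma gromovProd_nonneg {X : Type*} [MetricSpace X] (a b c : X) :
    0 ≤ gromovProd a b c := by
  have h := dist_triangle b a c
  rw [dist_comm b a] at h
  unfold gromovProd; linarith

private lemma gromovProd_le_left {X : Type*} [MetricSpace X] (a b c : X) :
    gromovProd a b c ≤ dist a b := by
  have h := dist_triangle a b c
  unfold gromovProd; linarith

private lemma gromovProd_le_right {X : Type*} [MetricSpace X] (a b c : X) :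
    gromovProd a b c ≤ dist a c := by
  have h := dist_triangle a c b
  rw [dist_comm c b] at h
  unfold gromovProd; linarith

private lemma gromovProd_comm {X : Type*} [MetricSpace X] (a b c : X) :
    gromovProd a b c = gromovProd a c b := by
  unfold gromovProd; rw [dist_comm b c]; ring

private lemma gromovProd_same {X : Type*} [MetricSpace X] (a b : X) :
    gromovProd a b b = dist a b := by
  unfold gromovProd; rw [dist_self]; ring

/-- A `ε`-separated subset of `[0, L]` is finite. -/
private lemma sep_finite {s : Set ℝ} {L ε : ℝ} (hε : 0 < ε) (hsub : s ⊆ Icc 0 L)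
    (hsep : ∀ x ∈ s, ∀ y ∈ s, x ≠ y → ε ≤ |x - y|) : s.Finite := by
  have hinj : Set.InjOn (fun t : ℝ => ⌊t / ε⌋) s := by
    intro x hx y hy hxy
    by_contra hne
    have h1 : |x / ε - y / ε| < 1 := Int.abs_sub_lt_one_of_floor_eq_floor hxy
    have h2 : ε ≤ |x - y| := hsep x hx y hy hne
    have h3 : |x - y| / ε < 1 := by
      rwa [show x / ε - y / ε = (x - y) / ε by ring, abs_div, abs_of_pos hε] at h1
    have := (div_lt_one hε).mp h3
    linarith
  have himg : ((fun t : ℝ => ⌊t / ε⌋) '' s).Finite := by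
    apply (Set.finite_Icc (0 : ℤ) ⌊L / ε⌋).subset
    rintro n ⟨t, ht, rfl⟩
    obtain ⟨ht0, htL⟩ := hsub ht
    constructor
    · exact Int.floor_nonneg.mpr (div_nonneg ht0 hε.le)
    · exact Int.floor_le_floor (by gcongr)
  exact Set.Finite.of_finite_image himg hinj

/-- Key construction: if two geodesics issuing from `a` are `δ`-close at time `R + δ`, the
path distance (outside the `R`-ball around `a`) between their time-`R` points is at most
`3δ`. -/
private lemma pathDist_le_of_close {X : Type*} [MetricSpace X] {delta R : ℝ}
    (hdelta : 0 < delta) (hR : 0 ≤ R) (hgeo : GeodesicMetricSpace X) {a u v : X}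
    {g1 g2 : ℝ → X} (h1 : IsGeodesicFrom g1 a u) (h2 : IsGeodesicFrom g2 a v)
    (hu : R + delta ≤ dist a u) (hv : R + delta ≤ dist a v)
    (hclose : dist (g1 (R + delta)) (g2 (R + delta)) ≤ delta) :
    pathDist a R (g1 R) (g2 R) ≤ ENNReal.ofReal (3 * delta) := by
  obtain ⟨g, hg⟩ := hgeo (g1 (R + delta)) (g2 (R + delta))
  set L : ℝ := dist (g1 (R + delta)) (g2 (R + delta)) with hLdef
  have hL0 : 0 ≤ L := dist_nonneg
  have hLδ : L ≤ delta := hclose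
  set f : ℝ → X := fun t =>
    if t ≤ 1/3 then g1 (R + 3*delta*t)
    else if t ≤ 2/3 then g (L*(3*t-1)) else g2 (R + 3*delta*(1-t)) with hfdef
  have hf1 : ∀ t : ℝ, t ≤ 1/3 → f t = g1 (R + 3*delta*t) := by
    intro t h; simp only [hfdef]; rw [if_pos h]
  have hf2 : ∀ t : ℝ, 1/3 < t → t ≤ 2/3 → f t = g (L*(3*t-1)) := by
    intro t h h'; simp only [hfdef]; rw [if_neg (not_le.mpr h), if_pos h']
  have hf3 : ∀ t : ℝ, 2/3 < t → f t = g2 (R + 3*delta*(1-t)) := by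
    intro t h; simp only [hfdef]
    rw [if_neg (not_le.mpr (by linarith : (1:ℝ)/3 < t)), if_neg (not_le.mpr h)]
  have mem1 : ∀ r : ℝ, 0 ≤ r → r ≤ 1/3 → R + 3*delta*r ∈ Icc (0:ℝ) (dist a u) := by
    intro r h0 h1'; constructor <;> nlinarith
  have mem3 : ∀ r : ℝ, 2/3 ≤ r → r ≤ 1 → R + 3*delta*(1-r) ∈ Icc (0:ℝ) (dist a v) := by
    intro r h0 h1'; constructor <;> nlinarith
  have mem2 : ∀ r : ℝ, 1/3 ≤ r → r ≤ 2/3 →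
      L*(3*r-1) ∈ Icc (0:ℝ) (dist (g1 (R + delta)) (g2 (R + delta))) := by
    intro r h0 h1'
    rw [← hLdef]
    constructor <;> nlinarith
  -- distances along the three pieces
  have B1 : ∀ s t : ℝ, 0 ≤ s → s ≤ t → t ≤ 1/3 →
      dist (g1 (R + 3*delta*s)) (g1 (R + 3*delta*t)) = 3*delta*(t-s) := by
    intro s t h0 hst h13
    rw [h1.2.2 _ (mem1 s h0 (hst.trans h13)) _ (mem1 t (h0.trans hst) h13),
      show (R + 3*delta*s) - (R + 3*delta*t) = -(3*delta*(t-s)) by ring, abs_neg,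
      abs_of_nonneg (by nlinarith)]
  have B2 : ∀ s t : ℝ, 1/3 ≤ s → s ≤ t → t ≤ 2/3 →
      dist (g (L*(3*s-1))) (g (L*(3*t-1))) ≤ 3*delta*(t-s) := by
    intro s t h0 hst h23
    rw [hg.2.2 _ (mem2 s h0 (hst.trans h23)) _ (mem2 t (h0.trans hst) h23),
      show L*(3*s-1) - L*(3*t-1) = -(3*L*(t-s)) by ring, abs_neg,
      abs_of_nonneg (by nlinarith)]
    nlinarith
  have B3 : ∀ s t : ℝ, 2/3 ≤ s → s ≤ t → t ≤ 1 →
      dist (g2 (R + 3*delta*(1-s))) (g2 (R + 3*delta*(1-t))) = 3*delta*(t-s) := by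
    intro s t h0 hst h13
    rw [h2.2.2 _ (mem3 s h0 (hst.trans h13)) _ (mem3 t (h0.trans hst) h13),
      show (R + 3*delta*(1-s)) - (R + 3*delta*(1-t)) = 3*delta*(t-s) by ring,
      abs_of_nonneg (by nlinarith)]
  -- breakpoint values
  have bp1 : g1 (R + delta) = g (L*(3*(1/3 : ℝ)-1)) := by
    rw [show L*(3*(1/3 : ℝ)-1) = 0 by ring, hg.1]
  have bp2 : g (L*(3*(2/3 : ℝ)-1)) = g2 (R + 3*delta*(1-(2/3 : ℝ))) := by
    rw [show L*(3*(2/3 : ℝ)-1) = L by ring, show R + 3*delta*(1-(2/3:ℝ)) = R + delta by ring]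
    exact hg.2.1
  have key : ∀ s ∈ Icc (0:ℝ) 1, ∀ t ∈ Icc (0:ℝ) 1, s ≤ t →
      dist (f s) (f t) ≤ 3*delta*(t-s) := by
    intro s hs t ht hst
    by_cases hs3 : s ≤ 1/3
    · by_cases ht3 : t ≤ 1/3
      · rw [hf1 s hs3, hf1 t ht3, B1 s t hs.1 hst ht3]
      · push_neg at ht3
        by_cases ht6 : t ≤ 2/3
        · rw [hf1 s hs3, hf2 t ht3 ht6]
          calc dist (g1 (R + 3*delta*s)) (g (L*(3*t-1)))
              ≤ dist (g1 (R + 3*delta*s)) (g1 (R + 3*delta*(1/3)))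
                + dist (g1 (R + 3*delta*(1/3))) (g (L*(3*t-1))) := dist_triangle _ _ _
            _ ≤ 3*delta*(1/3-s) + 3*delta*(t-1/3) := by
                refine add_le_add ?_ ?_
                · rw [B1 s (1/3) hs.1 hs3 le_rfl]
                · rw [show R + 3*delta*(1/3 : ℝ) = R + delta by ring, bp1]
                  exact B2 (1/3) t le_rfl ht3.le ht6
            _ = 3*delta*(t-s) := by ring
        · push_neg at ht6
          rw [hf1 s hs3, hf3 t ht6]
          calc dist (g1 (R + 3*delta*s)) (g2 (R + 3*delta*(1-t)))
              ≤ dist (g1 (R + 3*delta*s)) (g1 (R + 3*delta*(1/3)))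
                + dist (g1 (R + 3*delta*(1/3))) (g (L*(3*(2/3 : ℝ)-1)))
                  + dist (g (L*(3*(2/3 : ℝ)-1))) (g2 (R + 3*delta*(1-t))) :=
                dist_triangle4 _ _ _ _
            _ ≤ 3*delta*(1/3-s) + 3*delta*(2/3-1/3) + 3*delta*(t-2/3) := by
                refine add_le_add (add_le_add ?_ ?_) ?_
                · rw [B1 s (1/3) hs.1 hs3 le_rfl]
                · rw [show R + 3*delta*(1/3 : ℝ) = R + delta by ring, bp1]
                  exact B2 (1/3) (2/3) le_rfl (by norm_num) le_rfl
                · rw [bp2, B3 (2/3) t le_rfl ht6.le ht.2]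
            _ = 3*delta*(t-s) := by ring
    · push_neg at hs3
      by_cases hs6 : s ≤ 2/3
      · by_cases ht6 : t ≤ 2/3
        · rw [hf2 s hs3 hs6, hf2 t (hs3.trans_le hst) ht6]
          exact B2 s t hs3.le hst ht6
        · push_neg at ht6
          rw [hf2 s hs3 hs6, hf3 t ht6]
          calc dist (g (L*(3*s-1))) (g2 (R + 3*delta*(1-t)))
              ≤ dist (g (L*(3*s-1))) (g (L*(3*(2/3 : ℝ)-1)))
                + dist (g (L*(3*(2/3 : ℝ)-1))) (g2 (R + 3*delta*(1-t))) := dist_triangle _ _ _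
            _ ≤ 3*delta*(2/3-s) + 3*delta*(t-2/3) := by
                refine add_le_add ?_ ?_
                · exact B2 s (2/3) hs3.le hs6 le_rfl
                · rw [bp2, B3 (2/3) t le_rfl ht6.le ht.2]
            _ = 3*delta*(t-s) := by ring
      · push_neg at hs6
        rw [hf3 s hs6, hf3 t (hs6.trans_le hst), B3 s t hs6.le hst ht.2]
  have hLip : LipschitzOnWith (3*delta).toNNReal f (Icc (0:ℝ) 1) := by
    apply LipschitzOnWith.of_dist_le_mul
    intro s hs t ht
    rw [Real.coe_toNNReal _ (by positivity), Real.dist_eq]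
    rcases le_total s t with h | h
    · calc dist (f s) (f t) ≤ 3*delta*(t-s) := key s hs t ht h
        _ ≤ 3*delta*|s-t| := by
          rw [abs_sub_comm, abs_of_nonneg (by linarith)]
    · rw [dist_comm]
      calc dist (f t) (f s) ≤ 3*delta*(s-t) := key t ht s hs h
        _ ≤ 3*delta*|s-t| := by rw [abs_of_nonneg (by linarith)]
  have hmem : ContinuousOn f (Icc 0 1) ∧ f 0 = g1 R ∧ f 1 = g2 R ∧
      ∀ t ∈ Icc (0:ℝ) 1, R ≤ dist (f t) a := by
    refine ⟨hLip.continuousOn, ?_, ?_, ?_⟩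
    · rw [hf1 0 (by norm_num)]; norm_num
    · rw [hf3 1 (by norm_num)]; norm_num
    · intro t ht
      by_cases hs3 : t ≤ 1/3
      · rw [hf1 t hs3]
        have := h1.2.2 _ (mem1 t ht.1 hs3) 0 ⟨le_rfl, dist_nonneg⟩
        rw [h1.1] at this
        rw [this, sub_zero, abs_of_nonneg (by nlinarith [ht.1, ht.2])]
        nlinarith [ht.1, ht.2]
      · push_neg at hs3
        by_cases ht6 : t ≤ 2/3
        · rw [hf2 t hs3 ht6]
          have hd1 : dist (g (L*(3*t-1))) (g 0) ≤ L := by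
            have := hg.2.2 _ (mem2 t hs3.le ht6) 0 ⟨le_rfl, dist_nonneg⟩
            rw [this, sub_zero, abs_of_nonneg (by nlinarith)]
            nlinarith
          have hd2 : dist (g 0) a = R + delta := by
            rw [hg.1]
            have := h1.2.2 _ (mem1 (1/3) (by norm_num) le_rfl) 0 ⟨le_rfl, dist_nonneg⟩
            rw [h1.1] at this
            rw [show R + delta = R + 3*delta*(1/3 : ℝ) by ring, this, sub_zero,
              abs_of_nonneg (by nlinarith)]
          have := dist_triangle (g 0) (g (L*(3*t-1))) a
          rw [dist_comm (g 0) (g (L*(3*t-1)))] at this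
          linarith [hd1, hd2, this]
        · push_neg at ht6
          rw [hf3 t ht6]
          have := h2.2.2 _ (mem3 t ht6.le ht.2) 0 ⟨le_rfl, dist_nonneg⟩
          rw [h2.1] at this
          rw [this, sub_zero, abs_of_nonneg (by nlinarith [ht.2])]
          nlinarith [ht.2]
  calc pathDist a R (g1 R) (g2 R) ≤ eVariationOn f (Icc (0:ℝ) 1) := by
        unfold pathDist
        exact iInf₂_le f hmem
    _ = eVariationOn (f ∘ id) (Icc (0:ℝ) 1) := rfl
    _ ≤ (3*delta).toNNReal * eVariationOn id (Icc (0:ℝ) 1) :=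
        hLip.comp_eVariationOn_le (fun x hx => hx)
    _ ≤ (3*delta).toNNReal * ENNReal.ofReal 1 := by
        refine mul_le_mul_right ?_ _
        have := (monotoneOn_id (s := Icc (0:ℝ) 1)).eVariationOn_le
          (a := 0) (b := 1) ⟨le_rfl, zero_le_one⟩ ⟨zero_le_one, le_rfl⟩
        rw [Set.inter_self] at this
        simpa using this
    _ = ENNReal.ofReal (3*delta) := by
        rw [ENNReal.ofReal_one, mul_one, ENNReal.ofReal]
  
/-- If the Gromov product `(b,c)_a` is at least `R + δ`, then the projection distance
`d_a(b,c)` is at most `3δ`. -/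
private lemma projDist_le_of_gromov {X : Type*} [MetricSpace X] {delta R : ℝ}
    (hdelta : 0 < delta) (hR : 0 ≤ R) (hgeo : GeodesicMetricSpace X)
    (hthin : DeltaThin X delta) {a b c : X} (h : R + delta ≤ gromovProd a b c) :
    projDist a R b c ≤ ENNReal.ofReal (3 * delta) := by
  have get : ∀ {w e : X}, w ∈ projSet a R e →
      ∃ γ : ℝ → X, IsGeodesicFrom γ a e ∧ γ R = w := by
    rintro w e ⟨hw, γ, hγ, t, ht, hwt⟩
    refine ⟨γ, hγ, ?_⟩
    have hdt : dist w a = t := by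
      rw [← hwt]
      have := hγ.2.2 t ht 0 ⟨le_rfl, dist_nonneg⟩
      rw [hγ.1] at this
      rw [this, sub_zero, abs_of_nonneg ht.1]
    rw [← show t = R by rw [← hdt, hw], hwt]
  have key : ∀ u v : X, R + delta ≤ gromovProd a u v →
      ∀ x ∈ projSet a R u, ∀ y ∈ projSet a R v,
        pathDist a R x y ≤ ENNReal.ofReal (3 * delta) := by
    intro u v huv x hx y hy
    obtain ⟨γ₁, h₁, hx'⟩ := get hx
    obtain ⟨γ₂, h₂, hy'⟩ := get hy
    have hclose : dist (γ₁ (R + delta)) (γ₂ (R + delta)) ≤ delta :=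
      hthin a u v γ₁ γ₂ h₁ h₂ (R + delta) ⟨by linarith, huv⟩
    rw [← hx', ← hy']
    exact pathDist_le_of_close hdelta hR hgeo h₁ h₂
      (huv.trans (gromovProd_le_left a u v)) (huv.trans (gromovProd_le_right a u v)) hclose
  have hbb : R + delta ≤ gromovProd a b b := by
    rw [gromovProd_same]; exact h.trans (gromovProd_le_left a b c)
  have hcc : R + delta ≤ gromovProd a c c := by
    rw [gromovProd_same]; exact h.trans (gromovProd_le_right a b c)
  have hcb : R + delta ≤ gromovProd a c b := by rw [gromovProd_comm]; exact h
  unfold projDist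
  refine iSup₂_le fun x hx => iSup₂_le fun y hy => ?_
  rcases hx with hx | hx <;> rcases hy with hy | hy
  · exact key b b hbb x hx y hy
  · exact key b c h x hx y hy
  · exact key c b hcb x hx y hy
  · exact key c c hcc x hx y hy

/-- **The finiteness axiom (P3)** for the associated projection distances, with projection
constant `4δ`: for distinct `b, c ∈ C` the set of `a ∈ C` with `d_a(b,c) > 4δ` is finite. -/
theorem statement7 {X : Type*} [MetricSpace X]
    (δ ρ R : ℝ) (hδ : 0 < δ)
    (hgeo : GeodesicMetricSpace X) (hthin : DeltaThin X δ)
    (C : Set X) (hsep : Separated C ρ) (hρ : 20 * δ ≤ ρ)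
    (hR₁ : 2 + 2 * δ ≤ R) (hR₂ : R ≤ ρ / 2 - 3 * δ) :
    ∀ b ∈ C, ∀ c ∈ C, b ≠ c →
      {a : X | a ∈ C ∧ a ≠ b ∧ a ≠ c ∧
        ENNReal.ofReal (4 * δ) < projDist a R b c}.Finite := by

  intro b hb c hc hbc
  have hR0 : 0 ≤ R := by linarith
  set S : Set X := {a : X | a ∈ C ∧ a ≠ b ∧ a ≠ c ∧
    ENNReal.ofReal (4 * δ) < projDist a R b c} with hSdef
  have hgp : ∀ a ∈ S, gromovProd a b c < R + δ := by
    intro a ha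
    by_contra hcon
    push_neg at hcon
    have h1 := projDist_le_of_gromov hδ hR0 hgeo hthin hcon
    have h2 : ENNReal.ofReal (3 * δ) ≤ ENNReal.ofReal (4 * δ) :=
      ENNReal.ofReal_le_ofReal (by linarith)
    exact absurd (lt_of_lt_of_le ha.2.2.2 (h1.trans h2)) (lt_irrefl _)
  obtain ⟨γ, hγ⟩ := hgeo b c
  have htmem : ∀ a : X, gromovProd b a c ∈ Icc (0:ℝ) (dist b c) :=
    fun a => ⟨gromovProd_nonneg b a c, gromovProd_le_right b a c⟩
  have hdist : ∀ a ∈ S, dist a (γ (gromovProd b a c)) < R + 2 * δ := by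
    intro a ha
    obtain ⟨γ₁, h₁⟩ := hgeo b a
    set t := gromovProd b a c with htdef
    have hthint : dist (γ₁ t) (γ t) ≤ δ :=
      hthin b a c γ₁ γ h₁ hγ t ⟨gromovProd_nonneg b a c, le_rfl⟩
    have ht' : t ≤ dist b a := htdef ▸ gromovProd_le_left b a c
    have ht0 : 0 ≤ t := htdef ▸ gromovProd_nonneg b a c
    have h2 : dist a (γ₁ t) = gromovProd a b c := by
      calc dist a (γ₁ t) = dist (γ₁ (dist b a)) (γ₁ t) := by rw [h₁.2.1]
        _ = |dist b a - t| := h₁.2.2 (dist b a) ⟨dist_nonneg, le_rfl⟩ t ⟨ht0, ht'⟩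
        _ = gromovProd a b c := by
            rw [abs_of_nonneg (by linarith), htdef]
            unfold gromovProd
            rw [dist_comm b a]
            ring
    calc dist a (γ t) ≤ dist a (γ₁ t) + dist (γ₁ t) (γ t) := dist_triangle _ _ _
      _ ≤ gromovProd a b c + δ := by rw [h2]; linarith
      _ < R + 2 * δ := by linarith [hgp a ha]
  have hgd : ∀ t₁ ∈ Icc (0:ℝ) (dist b c), ∀ t₂ ∈ Icc (0:ℝ) (dist b c),
      dist (γ t₁) (γ t₂) = |t₁ - t₂| := hγ.2.2
  set T : X → ℝ := fun a => gromovProd b a c with hTdef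
  have hinj : Set.InjOn T S := by
    intro a₁ h₁ a₂ h₂ heq
    by_contra hne
    have hρd : ρ ≤ dist a₁ a₂ := hsep a₁ h₁.1 a₂ h₂.1 hne
    have := dist_triangle a₁ (γ (T a₁)) a₂
    rw [heq] at this
    have h3 := hdist a₁ h₁
    have h4 := hdist a₂ h₂
    rw [dist_comm (γ (T a₂)) a₂] at this
    simp only [hTdef] at this h3 h4 heq
    rw [heq] at h3
    linarith
  have himg : (T '' S).Finite := by
    apply sep_finite (L := dist b c) (ε := 2 * δ) (by linarith)
    · rintro x ⟨a, ha, rfl⟩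
      exact htmem a
    · rintro x ⟨a₁, h₁, rfl⟩ y ⟨a₂, h₂, rfl⟩ hne
      have hane : a₁ ≠ a₂ := fun h => hne (by rw [h])
      have hρd : ρ ≤ dist a₁ a₂ := hsep a₁ h₁.1 a₂ h₂.1 hane
      have htri : dist a₁ a₂ ≤ dist a₁ (γ (T a₁)) + dist (γ (T a₁)) (γ (T a₂))
          + dist (γ (T a₂)) a₂ := dist_triangle4 _ _ _ _
      rw [hgd _ (htmem a₁) _ (htmem a₂)] at htri
      have h3 := hdist a₁ h₁
      have h4 := hdist a₂ h₂
      rw [dist_comm (γ (T a₂)) a₂] at htri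
      simp only [hTdef] at htri h3 h4 ⊢
      have : ρ - 2 * (R + 2 * δ) ≤ |gromovProd b a₁ c - gromovProd b a₂ c| := by linarith
      linarith [this]
  exact Set.Finite.of_finite_image himg hinj
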